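/- Let f be a nonzero Laurent polynomial in ℤ[T,T⁻¹]. Suppose (i) f is mod unit symmetric, i.e. ι(f) = u·f for some unit u of ℤ[T,T⁻¹]; (ii) the degree of f (maximum minus minimum of the support) is even; and (iii) the trace of f (the sum of its coefficients) is nonzero. Then f is unit symmetric: there exists an integer m such that ι(T^m · f) = T^m · f. -/

import Mathlib

open LaurentPolynomial AddMonoidAlgebra

/-- The trace (sum of coefficients) of a Laurent polynomial, as an algebra homomorphism. -/
noncomputable def myTr : LaurentPolynomial ℤ →ₐ[ℤ] ℤ := (AddMonoidAlgebra.lift ℤ ℤ ℤ) 1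

lemma myTr_apply (p : LaurentPolynomial ℤ) : myTr p = p.coeff.sum fun _ a => a := by
  rw [myTr, AddMonoidAlgebra.lift_apply]; simp

lemma myTr_single (n : ℤ) (a : ℤ) : myTr (AddMonoidAlgebra.single n a) = a := by
  rw [myTr_apply, coeff_single, Finsupp.sum_single_index]; rfl

lemma myTr_invert (p : LaurentPolynomial ℤ) : myTr (invert p) = myTr p := by
  rw [myTr_apply, myTr_apply]
  have he : (invert p).coeff = Finsupp.equivMapDomain (AddEquiv.neg ℤ).toEquiv p.coeff :=
    Finsupp.ext fun k => by simp [invert_apply]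
  rw [he]
  exact Finsupp.sum_equivMapDomain _ _ _

lemma invert_support (p : LaurentPolynomial ℤ) :
    (invert p).coeff.support = p.coeff.support.image (fun a => -a) := by
  ext k
  simp only [Finsupp.mem_support_iff, Finset.mem_image, invert_apply]
  constructor
  · intro h; exact ⟨-k, by simpa using h, by ring⟩
  · rintro ⟨x, hx, rfl⟩; simpa using hx

lemma max'_mul {p q : LaurentPolynomial ℤ} (hp : p.coeff.support.Nonempty) (hq : q.coeff.support.Nonempty)
    (hpq : (p * q).coeff.support.Nonempty) :
    (p * q).coeff.support.max' hpq = p.coeff.support.max' hp + q.coeff.support.max' hq := by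
  classical
  set Mp := p.coeff.support.max' hp with hMp
  set Mq := q.coeff.support.max' hq with hMq
  have hu : UniqueAdd p.coeff.support q.coeff.support Mp Mq := by
    intro a b ha hb hab
    have h1 : a ≤ Mp := Finset.le_max' _ _ ha
    have h2 : b ≤ Mq := Finset.le_max' _ _ hb
    constructor <;> omega
  have hmem : Mp + Mq ∈ (p * q).coeff.support := by
    rw [Finsupp.mem_support_iff, coeff_mul_add_of_uniqueAdd hu]
    exact mul_ne_zero (Finsupp.mem_support_iff.mp (Finset.max'_mem _ _))
      (Finsupp.mem_support_iff.mp (Finset.max'_mem _ _))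
  refine le_antisymm (Finset.max'_le _ _ _ fun c hc => ?_) (Finset.le_max' _ _ hmem)
  obtain ⟨a, ha, b, hb, rfl⟩ := Finset.mem_add.mp (AddMonoidAlgebra.support_coeff_mul_subset p q hc)
  exact add_le_add (Finset.le_max' _ _ ha) (Finset.le_max' _ _ hb)

lemma min'_mul {p q : LaurentPolynomial ℤ} (hp : p.coeff.support.Nonempty) (hq : q.coeff.support.Nonempty)
    (hpq : (p * q).coeff.support.Nonempty) :
    (p * q).coeff.support.min' hpq = p.coeff.support.min' hp + q.coeff.support.min' hq := by
  classical
  set Mp := p.coeff.support.min' hp with hMp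
  set Mq := q.coeff.support.min' hq with hMq
  have hu : UniqueAdd p.coeff.support q.coeff.support Mp Mq := by
    intro a b ha hb hab
    have h1 : Mp ≤ a := Finset.min'_le _ _ ha
    have h2 : Mq ≤ b := Finset.min'_le _ _ hb
    constructor <;> omega
  have hmem : Mp + Mq ∈ (p * q).coeff.support := by
    rw [Finsupp.mem_support_iff, coeff_mul_add_of_uniqueAdd hu]
    exact mul_ne_zero (Finsupp.mem_support_iff.mp (Finset.min'_mem _ _))
      (Finsupp.mem_support_iff.mp (Finset.min'_mem _ _))
  refine le_antisymm (Finset.min'_le _ _ hmem) (Finset.le_min' _ _ _ fun c hc => ?_)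
  obtain ⟨a, ha, b, hb, rfl⟩ := Finset.mem_add.mp (AddMonoidAlgebra.support_coeff_mul_subset p q hc)
  exact add_le_add (Finset.min'_le _ _ ha) (Finset.min'_le _ _ hb)

/-- Every unit of `ℤ[T;T⁻¹]` is a single monomial. -/
lemma unit_is_single (u : (LaurentPolynomial ℤ)ˣ) :
    ∃ (n : ℤ) (a : ℤ), a ≠ 0 ∧ (u : LaurentPolynomial ℤ) = AddMonoidAlgebra.single n a := by
  have hu : (u : LaurentPolynomial ℤ) ≠ 0 := Units.ne_zero u
  have hv : u⁻¹.val ≠ 0 := Units.ne_zero _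
  have hu' : (u : LaurentPolynomial ℤ).coeff.support.Nonempty := Finsupp.support_nonempty_iff.mpr (mt AddMonoidAlgebra.coeff_eq_zero.mp hu)
  have hv' : u⁻¹.val.coeff.support.Nonempty := Finsupp.support_nonempty_iff.mpr (mt AddMonoidAlgebra.coeff_eq_zero.mp hv)
  have huv : (u : LaurentPolynomial ℤ) * u⁻¹.val = 1 := u.mul_inv
  have h1 : ((u : LaurentPolynomial ℤ) * u⁻¹.val).coeff.support = {0} := by
    rw [huv, ← single_zero_one_eq_one]
    exact Finsupp.support_single_ne_zero _ one_ne_zero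
  have hpq : ((u : LaurentPolynomial ℤ) * u⁻¹.val).coeff.support.Nonempty := by
    rw [h1]; exact ⟨0, Finset.mem_singleton_self 0⟩
  have hM := max'_mul hu' hv' hpq
  have hm := min'_mul hu' hv' hpq
  have hM0 : ((u : LaurentPolynomial ℤ) * u⁻¹.val).coeff.support.max' hpq = 0 :=
    Finset.mem_singleton.mp (h1.subset (Finset.max'_mem _ hpq))
  have hm0 : ((u : LaurentPolynomial ℤ) * u⁻¹.val).coeff.support.min' hpq = 0 :=
    Finset.mem_singleton.mp (h1.subset (Finset.min'_mem _ hpq))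
  have hle1 : (u : LaurentPolynomial ℤ).coeff.support.min' hu' ≤
      (u : LaurentPolynomial ℤ).coeff.support.max' hu' := Finset.min'_le _ _ (Finset.max'_mem _ _)
  have hle2 : u⁻¹.val.coeff.support.min' hv' ≤
      u⁻¹.val.coeff.support.max' hv' := Finset.min'_le _ _ (Finset.max'_mem _ _)
  have heq : (u : LaurentPolynomial ℤ).coeff.support.min' hu' =
      (u : LaurentPolynomial ℤ).coeff.support.max' hu' := by omega
  set n := (u : LaurentPolynomial ℤ).coeff.support.max' hu' with hn
  refine ⟨n, (u : LaurentPolynomial ℤ).coeff n, ?_, ?_⟩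
  · exact Finsupp.mem_support_iff.mp (Finset.max'_mem _ _)
  · ext k
    rcases eq_or_ne k n with rfl | hk
    · rw [coeff_single, Finsupp.single_apply, if_pos rfl]
    · rw [coeff_single, Finsupp.single_apply, if_neg (Ne.symm hk)]
      by_contra h
      have hk' : k ∈ (u : LaurentPolynomial ℤ).coeff.support := Finsupp.mem_support_iff.mpr h
      have := Finset.le_max' _ _ hk'
      have := Finset.min'_le _ _ hk'
      omega

/-- A nonzero Laurent polynomial over `ℤ` which is mod unit symmetric, of even degree,
and of nonzero trace (sum of coefficients), is unit symmetric: some monomial multiple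
`T^m * f` is symmetric under the inversion automorphism `invert`. -/
theorem mod_unit_symmetric_even_degree_nonzero_trace_unit_symmetric
    (f : LaurentPolynomial ℤ) (hf : f ≠ 0)
    (hmus : ∃ u : (LaurentPolynomial ℤ)ˣ, invert f = (u : LaurentPolynomial ℤ) * f)
    (hdeg : Even (f.coeff.support.max' (Finsupp.support_nonempty_iff.mpr (mt AddMonoidAlgebra.coeff_eq_zero.mp hf)) -
      f.coeff.support.min' (Finsupp.support_nonempty_iff.mpr (mt AddMonoidAlgebra.coeff_eq_zero.mp hf))))
    (htr : (f.coeff.sum fun _ a => a) ≠ 0) :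
    ∃ m : ℤ, invert (T m * f) = T m * f := by
  obtain ⟨u, hu⟩ := hmus
  obtain ⟨n, a, ha, hua⟩ := unit_is_single u
  rw [hua] at hu
  -- trace argument: a = 1
  have htr' : myTr f ≠ 0 := by rwa [myTr_apply]
  have h1 : myTr f = a * myTr f := by
    conv_lhs => rw [← myTr_invert, hu, map_mul, myTr_single]
  have ha1 : a = 1 := by
    have h0 : (a - 1) * myTr f = 0 := by linarith
    rcases mul_eq_zero.mp h0 with h | h
    · omega
    · exact absurd h htr'
  rw [ha1] at hu
  have hTn : AddMonoidAlgebra.single n (1 : ℤ) = (T n : LaurentPolynomial ℤ) := rfl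
  rw [hTn] at hu
  -- degree argument: n = -(M + mn)
  have hfne : f.coeff.support.Nonempty := Finsupp.support_nonempty_iff.mpr (mt AddMonoidAlgebra.coeff_eq_zero.mp hf)
  set M := f.coeff.support.max' hfne with hM
  set mn := f.coeff.support.min' hfne with hmn
  have hTne : (T n : LaurentPolynomial ℤ) ≠ 0 := (isUnit_T n).ne_zero
  have hTsupp : (T n : LaurentPolynomial ℤ).coeff.support = {n} :=
    Finsupp.support_single_ne_zero _ one_ne_zero
  have hTn' : (T n : LaurentPolynomial ℤ).coeff.support.Nonempty := by
    rw [hTsupp]; exact ⟨n, Finset.mem_singleton_self n⟩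
  have hprodne : (T n : LaurentPolynomial ℤ) * f ≠ 0 := mul_ne_zero hTne hf
  have hprod : ((T n : LaurentPolynomial ℤ) * f).coeff.support.Nonempty :=
    Finsupp.support_nonempty_iff.mpr (mt AddMonoidAlgebra.coeff_eq_zero.mp hprodne)
  have e1 : ((T n : LaurentPolynomial ℤ) * f).coeff.support.max' hprod = n + M := by
    rw [max'_mul hTn' hfne hprod]
    congr 1
    simp [hTsupp]
  have hs : ((T n : LaurentPolynomial ℤ) * f).coeff.support = f.coeff.support.image (fun a => -a) := by
    rw [← hu, invert_support]
  have e2 : ((T n : LaurentPolynomial ℤ) * f).coeff.support.max' hprod = -mn := by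
    refine le_antisymm (Finset.max'_le _ _ _ fun c hc => ?_) (Finset.le_max' _ _ ?_)
    · rw [hs] at hc
      obtain ⟨x, hx, rfl⟩ := Finset.mem_image.mp hc
      have := Finset.min'_le _ _ hx
      omega
    · rw [hs]
      exact Finset.mem_image.mpr ⟨mn, Finset.min'_mem _ _, rfl⟩
  have hnval : n = -mn - M := by omega
  obtain ⟨c, hc⟩ := hdeg
  refine ⟨-(c + mn), ?_⟩
  rw [map_mul, invert_T, hu, ← mul_assoc, ← T_add]
  congr 2
  omega
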